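/- With notation as in the multilinear theorem, define β_m(p) = inf { Θ_m(p₁,…,pₘ) ∏ⱼ ψⱼ(pⱼ)‖fⱼ‖_{Gψⱼ} : ∑ 1/pⱼ = 1/p, pⱼ ∈ (aⱼ,bⱼ) }. Then for every p ≥ 1 with β_m(p) < ∞, ‖M(f₁,…,fₘ)‖_{L^p(ℝ₊)} ≤ β_m(p); equivalently, sup_{p : β_m(p)<∞} ‖M(f⃗)‖_p/β_m(p) ≤ 1, i.e. ‖M(f⃗)‖_{Gβ_m} ≤ 1. -/

import Mathlib

open MeasureTheory ENNReal Set Function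

/-- Lebesgue measure restricted to `(0,∞)`. -/
noncomputable def muHalf : Measure ℝ := (volume : Measure ℝ).restrict (Ioi 0)

/-- The product measure on `ℝ₊^m`. -/
noncomputable def piHalf (m : ℕ) : Measure (Fin m → ℝ) :=
  Measure.pi fun _ => muHalf

/-- `Θ_m(p⃗) = ∫_{ℝ₊^m} |Q(1,x⃗)| ∏ xⱼ^{-1/pⱼ} dx⃗`. -/
noncomputable def Theta (m : ℕ) (Q : ℝ → (Fin m → ℝ) → ℝ) (p : Fin m → ℝ) : ℝ≥0∞ :=
  ∫⁻ xs, ENNReal.ofReal (|Q 1 xs| * ∏ j, (xs j) ^ (-(1 / p j))) ∂(piHalf m)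

/-- The Grand Lebesgue norm `‖f‖_{Gψ} = sup_{p ∈ (a,b)} ‖f‖_{L^p(μ)}/ψ(p)`. -/
noncomputable def grandNorm {Ω : Type*} [MeasurableSpace Ω] (μ : Measure Ω)
    (a : ℝ) (b : ℝ≥0∞) (ψ : ℝ → ℝ) (f : Ω → ℝ) : ℝ≥0∞ :=
  ⨆ p : {p : ℝ // a < p ∧ (ENNReal.ofReal p) < b},
    eLpNorm f (ENNReal.ofReal p.1) μ / ENNReal.ofReal (ψ p.1)

/-- `β_m(p) = inf { Θ_m(p⃗) ∏ⱼ ψⱼ(pⱼ)‖fⱼ‖_{Gψⱼ} : ∑ 1/pⱼ = 1/p, pⱼ ∈ (aⱼ,bⱼ) }`. -/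
noncomputable def betaFun (m : ℕ) (Q : ℝ → (Fin m → ℝ) → ℝ)
    (a : Fin m → ℝ) (b : Fin m → ℝ≥0∞) (ψ : Fin m → ℝ → ℝ)
    (f : Fin m → ℝ → ℝ) (q : ℝ) : ℝ≥0∞ :=
  ⨅ p : {p : Fin m → ℝ //
      (∀ j, a j < p j ∧ (ENNReal.ofReal (p j)) < b j) ∧ ∑ j, 1 / p j = 1 / q},
    Theta m Q p.1 * ∏ j,
      ENNReal.ofReal (ψ j (p.1 j)) * grandNorm muHalf (a j) (b j) (ψ j) (f j)

instance : SigmaFinite muHalf := by unfold muHalf; infer_instance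
instance (m : ℕ) : SigmaFinite (piHalf m) := by unfold piHalf; infer_instance

lemma map_mul_muHalf {c : ℝ} (hc : 0 < c) :
    Measure.map (fun y => c * y) muHalf = ENNReal.ofReal c⁻¹ • muHalf := by
  have hpre : (fun y => c * y) ⁻¹' (Ioi 0) = Ioi 0 := by
    ext y; simp [mul_pos_iff, hc, not_lt.mpr hc.le, hc.not_gt]
  rw [muHalf, ← hpre, ← Measure.restrict_map (measurable_const_mul c) measurableSet_Ioi,
    Real.map_volume_mul_left hc.ne', hpre, Measure.restrict_smul, abs_of_pos (inv_pos.mpr hc)]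

lemma lintegral_muHalf_comp_mul {c : ℝ} (hc : 0 < c) {g : ℝ → ℝ≥0∞} (hg : Measurable g) :
    ∫⁻ y, g (c * y) ∂muHalf = ENNReal.ofReal c⁻¹ * ∫⁻ y, g y ∂muHalf := by
  rw [← smul_eq_mul (ENNReal.ofReal c⁻¹), ← lintegral_smul_measure, ← map_mul_muHalf hc,
    lintegral_map hg (measurable_const_mul c)]

lemma map_mul_piHalf (m : ℕ) {c : ℝ} (hc : 0 < c) :
    Measure.map (fun t : Fin m → ℝ => fun j => c * t j) (piHalf m)
      = ((ENNReal.ofReal c⁻¹) ^ m) • piHalf m := by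
  have hmeas : Measurable (fun t : Fin m → ℝ => fun j => c * t j) :=
    measurable_pi_lambda _ fun j => (measurable_pi_apply j : Measurable fun t : Fin m → ℝ => t j).const_mul c
  have h1 : (ENNReal.ofReal c) ^ m • Measure.map (fun t : Fin m → ℝ => fun j => c * t j)
      (piHalf m) = piHalf m := by
    rw [piHalf]
    refine (Measure.pi_eq (μ := fun _ : Fin m => muHalf) fun s hs => ?_).symm
    have hpre : (fun t : Fin m → ℝ => fun j => c * t j) ⁻¹' (Set.univ.pi s)
        = Set.univ.pi fun j => (fun y => c * y) ⁻¹' (s j) := by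
      ext t; simp [Set.mem_pi]
    rw [Measure.smul_apply, Measure.map_apply hmeas (MeasurableSet.univ_pi hs), hpre,
      Measure.pi_pi]
    have hj : ∀ j, muHalf ((fun y => c * y) ⁻¹' (s j)) = ENNReal.ofReal c⁻¹ * muHalf (s j) := by
      intro j
      rw [← Measure.map_apply (measurable_const_mul c) (hs j), map_mul_muHalf hc,
        Measure.smul_apply, smul_eq_mul]
    simp only [hj, Finset.prod_mul_distrib, Finset.prod_const, smul_eq_mul]
    rw [Finset.card_univ, Fintype.card_fin, ← mul_assoc, ← mul_pow, ← ENNReal.ofReal_mul hc.le, mul_inv_cancel₀ hc.ne',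
      ENNReal.ofReal_one, one_pow, one_mul]
  calc Measure.map (fun t : Fin m → ℝ => fun j => c * t j) (piHalf m)
      = ((ENNReal.ofReal c⁻¹) ^ m * (ENNReal.ofReal c) ^ m) •
        Measure.map (fun t : Fin m → ℝ => fun j => c * t j) (piHalf m) := by
        rw [← mul_pow, ← ENNReal.ofReal_mul (inv_pos.mpr hc).le, inv_mul_cancel₀ hc.ne',
          ENNReal.ofReal_one, one_pow, one_smul]
    _ = ((ENNReal.ofReal c⁻¹) ^ m) • piHalf m := by
        rw [mul_smul, h1]

lemma lintegral_piHalf_comp_mul (m : ℕ) {c : ℝ} (hc : 0 < c) {g : (Fin m → ℝ) → ℝ≥0∞}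
    (hg : Measurable g) :
    ∫⁻ t, g (fun j => c * t j) ∂(piHalf m)
      = (ENNReal.ofReal c⁻¹) ^ m * ∫⁻ t, g t ∂(piHalf m) := by
  rw [← smul_eq_mul (ENNReal.ofReal c⁻¹ ^ m), ← lintegral_smul_measure, ← map_mul_piHalf m hc,
    lintegral_map hg (measurable_pi_lambda _ fun j => (measurable_pi_apply j : Measurable fun t : Fin m → ℝ => t j).const_mul c)]

lemma rpow_iSup_le {a : ℕ → ℝ≥0∞} {q : ℝ} (hq : 0 < q) :
    (⨆ n, a n) ^ q ≤ ⨆ n, a n ^ q := by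
  have h1 : (⨆ n, a n) ≤ (⨆ n, a n ^ q) ^ (1 / q) := by
    refine iSup_le fun n => ?_
    have : a n = (a n ^ q) ^ (1 / q) := by
      rw [← ENNReal.rpow_mul, mul_one_div_cancel hq.ne', ENNReal.rpow_one]
    rw [this]
    exact ENNReal.rpow_le_rpow (le_iSup (fun n => a n ^ q) n) (by positivity)
  calc (⨆ n, a n) ^ q ≤ ((⨆ n, a n ^ q) ^ (1 / q)) ^ q := ENNReal.rpow_le_rpow h1 hq.le
    _ = ⨆ n, a n ^ q := by
      rw [← ENNReal.rpow_mul, one_div_mul_cancel hq.ne', ENNReal.rpow_one]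

lemma minkowski_lintegral {α β : Type*} [MeasurableSpace α] [MeasurableSpace β]
    (μ : Measure α) (ν : Measure β) [SigmaFinite μ] [SigmaFinite ν]
    {F : α → β → ℝ≥0∞} (hF : Measurable (Function.uncurry F))
    {q : ℝ} (hq : 1 ≤ q) :
    (∫⁻ x, (∫⁻ t, F x t ∂ν) ^ q ∂μ) ^ (1 / q)
      ≤ ∫⁻ t, (∫⁻ x, F x t ^ q ∂μ) ^ (1 / q) ∂ν := by
  have hq0 : (0:ℝ) < q := lt_of_lt_of_le zero_lt_one hq
  rcases eq_or_lt_of_le hq with rfl | hq1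
  · simp only [ENNReal.rpow_one, one_div_one]
    exact le_of_eq (lintegral_lintegral_swap hF.aemeasurable)
  -- notation
  set G : α → ℝ≥0∞ := fun x => ∫⁻ t, F x t ∂ν with hGdef
  have hG : Measurable G := hF.lintegral_prod_right'
  set R : ℝ≥0∞ := ∫⁻ t, (∫⁻ x, F x t ^ q ∂μ) ^ (1 / q) ∂ν with hRdef
  have hqq' : q.HolderConjugate (Real.conjExponent q) := Real.HolderConjugate.conjExponent hq1
  set q' : ℝ := Real.conjExponent q with hq'def
  have hRmeas : Measurable fun t => (∫⁻ x, F x t ^ q ∂μ) ^ (1 / q) :=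
    (Measurable.lintegral_prod_left' (hF.pow measurable_const)).pow measurable_const
  -- truncations
  set Gn : ℕ → α → ℝ≥0∞ := fun n x => (spanningSets μ n).indicator (fun x => min (G x) n) x
    with hGndef
  have hGn_meas : ∀ n, Measurable (Gn n) := fun n =>
    (hG.min measurable_const).indicator (measurableSet_spanningSets μ n)
  have hGn_le : ∀ n x, Gn n x ≤ G x := by
    intro n x
    by_cases hx : x ∈ spanningSets μ n
    · simp only [hGndef, indicator_of_mem hx]; exact min_le_left _ _
    · simp [hGndef, indicator_of_notMem hx]
  have hGn_mono : Monotone Gn := by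
    intro i j hij x
    by_cases hx : x ∈ spanningSets μ i
    · have hx' : x ∈ spanningSets μ j := monotone_spanningSets μ hij hx
      simp only [hGndef, indicator_of_mem hx, indicator_of_mem hx']
      exact min_le_min le_rfl (Nat.cast_le.2 hij)
    · simp [hGndef, indicator_of_notMem hx]
  have hGn_top : ∀ n, ∫⁻ x, Gn n x ^ q ∂μ ≠ ∞ := by
    intro n
    have hb : ∀ x, Gn n x ^ q ≤ (spanningSets μ n).indicator (fun _ => (n : ℝ≥0∞) ^ q) x := by
      intro x
      by_cases hx : x ∈ spanningSets μ n
      · simp only [hGndef, indicator_of_mem hx]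
        exact ENNReal.rpow_le_rpow (min_le_right _ _) hq0.le
      · simp [hGndef, indicator_of_notMem hx, ENNReal.zero_rpow_of_pos hq0]
    refine ne_of_lt (lt_of_le_of_lt (lintegral_mono hb) ?_)
    rw [lintegral_indicator_const (measurableSet_spanningSets μ n)]
    exact ENNReal.mul_lt_top
      (ENNReal.rpow_lt_top_of_nonneg hq0.le (ENNReal.natCast_ne_top n))
      (measure_spanningSets_lt_top μ n)
  have hsup : ∀ x, ⨆ n, Gn n x = G x := by
    intro x
    refine le_antisymm (iSup_le fun n => hGn_le n x) ?_
    have h1 : ∀ k : ℕ, min (G x) k ≤ ⨆ n, Gn n x := by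
      intro k
      obtain ⟨N, hN⟩ : ∃ N, x ∈ spanningSets μ N := by
        have : x ∈ ⋃ n, spanningSets μ n := by rw [iUnion_spanningSets]; trivial
        exact mem_iUnion.1 this
      calc min (G x) k ≤ min (G x) (max k N : ℕ) :=
            min_le_min le_rfl (Nat.cast_le.2 (le_max_left k N))
        _ = Gn (max k N) x := by
            rw [hGndef]
            simp only [indicator_of_mem (monotone_spanningSets μ (le_max_right k N) hN)]
        _ ≤ ⨆ n, Gn n x := le_iSup (fun n => Gn n x) (max k N)
    rcases eq_or_ne (G x) ∞ with h8 | hfin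
    · rw [h8, ← ENNReal.iSup_natCast]
      refine iSup_le fun k => ?_
      have := h1 k
      rwa [h8, min_eq_right le_top] at this
    · obtain ⟨k, hk⟩ := ENNReal.exists_nat_gt hfin
      have := h1 k
      rwa [min_eq_left hk.le] at this
  -- the key estimate
  have key : ∀ n, (∫⁻ x, Gn n x ^ q ∂μ) ≤ R ^ q := by
    intro n
    set In : ℝ≥0∞ := ∫⁻ x, Gn n x ^ q ∂μ with hIndef
    have hq'pos : (0:ℝ) < q' := hqq'.symm.pos
    have step : In ≤ R * In ^ (1 / q') := by
      have e1 : ∀ x, Gn n x ^ q = Gn n x ^ (q - 1) * Gn n x := by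
        intro x
        have hqe : q = (q - 1) + 1 := by ring
        rw [hqe, ENNReal.rpow_add_of_nonneg _ _ (by linarith) zero_le_one, ENNReal.rpow_one]
        ring_nf
      have swapmeas : AEMeasurable
          (fun z : α × β => Gn n z.1 ^ (q - 1) * F z.1 z.2) (μ.prod ν) :=
        ((((hGn_meas n).comp measurable_fst).pow measurable_const).mul hF).aemeasurable
      calc In = ∫⁻ x, Gn n x ^ (q - 1) * Gn n x ∂μ := lintegral_congr fun x => e1 x
        _ ≤ ∫⁻ x, Gn n x ^ (q - 1) * G x ∂μ :=
            lintegral_mono fun x => mul_le_mul_right (hGn_le n x) _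
        _ = ∫⁻ x, ∫⁻ t, Gn n x ^ (q - 1) * F x t ∂ν ∂μ :=
            lintegral_congr fun x => (lintegral_const_mul _ hF.of_uncurry_left).symm
        _ = ∫⁻ t, ∫⁻ x, Gn n x ^ (q - 1) * F x t ∂μ ∂ν := lintegral_lintegral_swap swapmeas
        _ ≤ ∫⁻ t, (∫⁻ x, (Gn n x ^ (q - 1)) ^ q' ∂μ) ^ (1 / q')
              * (∫⁻ x, F x t ^ q ∂μ) ^ (1 / q) ∂ν := by
            refine lintegral_mono fun t => ?_
            exact ENNReal.lintegral_mul_le_Lp_mul_Lq μ hqq'.symm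
              (((hGn_meas n).pow measurable_const).aemeasurable)
              ((hF.comp (measurable_id.prodMk measurable_const)).aemeasurable)
        _ = In ^ (1 / q') * R := by
            have e2 : ∀ x, (Gn n x ^ (q - 1)) ^ q' = Gn n x ^ q := by
              intro x
              rw [← ENNReal.rpow_mul, hqq'.sub_one_mul_conj]
            simp_rw [e2]
            rw [lintegral_const_mul _ hRmeas, ← hIndef, ← hRdef]
        _ = R * In ^ (1 / q') := mul_comm _ _
    by_cases hIn0 : In = 0
    · rw [hIn0]; exact zero_le
    · have hInt : In ≠ ⊤ := hGn_top n
      have hsplit : In = In ^ (1 / q) * In ^ (1 / q') := by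
        rw [← ENNReal.rpow_add_of_nonneg _ _ (by positivity) (by positivity)]
        rw [one_div, one_div, hqq'.inv_add_inv_eq_one, ENNReal.rpow_one]
      have hne0 : In ^ (1 / q') ≠ 0 := by
        simp [ENNReal.rpow_eq_zero_iff, hIn0, hInt]
      have hnetop : In ^ (1 / q') ≠ ⊤ :=
        (ENNReal.rpow_lt_top_of_nonneg (by positivity) hInt).ne
      have h3 : In ^ (1 / q) ≤ R :=
        (ENNReal.mul_le_mul_iff_left hne0 hnetop).1 (by rw [← hsplit]; exact step)
      calc In = (In ^ (1 / q)) ^ q := by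
            rw [← ENNReal.rpow_mul, one_div_mul_cancel hq0.ne', ENNReal.rpow_one]
        _ ≤ R ^ q := ENNReal.rpow_le_rpow h3 hq0.le
  -- conclude
  have hGq : ∫⁻ x, G x ^ q ∂μ ≤ R ^ q := by
    have hmc : ∫⁻ x, ⨆ n, Gn n x ^ q ∂μ = ⨆ n, ∫⁻ x, Gn n x ^ q ∂μ :=
      lintegral_iSup (fun n => (hGn_meas n).pow measurable_const)
        (fun i j hij x => ENNReal.rpow_le_rpow (hGn_mono hij x) hq0.le)
    calc ∫⁻ x, G x ^ q ∂μ ≤ ∫⁻ x, ⨆ n, Gn n x ^ q ∂μ := by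
          refine lintegral_mono fun x => ?_
          rw [← hsup x]
          exact rpow_iSup_le hq0
      _ = ⨆ n, ∫⁻ x, Gn n x ^ q ∂μ := hmc
      _ ≤ R ^ q := iSup_le key
  calc (∫⁻ x, G x ^ q ∂μ) ^ (1 / q) ≤ (R ^ q) ^ (1 / q) :=
        ENNReal.rpow_le_rpow hGq (by positivity)
    _ = R := by rw [← ENNReal.rpow_mul, mul_one_div_cancel hq0.ne', ENNReal.rpow_one]

lemma core_bound (m : ℕ) (Q : ℝ → (Fin m → ℝ) → ℝ)
    (hQmeas : Measurable (fun z : ℝ × (Fin m → ℝ) => Q z.1 z.2))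
    (hhom : ∀ δ > (0:ℝ), ∀ x > (0:ℝ), ∀ xs : Fin m → ℝ, (∀ j, 0 < xs j) →
      Q (δ * x) (fun j => δ * xs j) = δ ^ (-(m:ℝ)) * Q x xs)
    (g : Fin m → ℝ → ℝ) (hg : ∀ j, Measurable (g j))
    {q : ℝ} (hq : 1 ≤ q) {p : Fin m → ℝ} (hp1 : ∀ j, 1 < p j)
    (hsum : ∑ j, 1 / p j = 1 / q) :
    eLpNorm (fun x => ∫ xs, Q x xs * ∏ j, g j (xs j) ∂(piHalf m)) (ENNReal.ofReal q) muHalf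
      ≤ Theta m Q p * ∏ j, eLpNorm (g j) (ENNReal.ofReal (p j)) muHalf := by
  have hq0 : (0:ℝ) < q := lt_of_lt_of_le zero_lt_one hq
  have hppos : ∀ j, (0:ℝ) < p j := fun j => lt_trans zero_lt_one (hp1 j)
  -- ae positivity
  have hxpos : ∀ᵐ x ∂muHalf, 0 < x := by
    unfold muHalf
    exact (ae_restrict_mem measurableSet_Ioi).mono fun x hx => hx
  have htpos : ∀ᵐ t ∂(piHalf m), ∀ j, 0 < t j := by
    rw [piHalf]
    exact Filter.eventually_all.2 fun j => Measure.tendsto_eval_ae_ae.eventually hxpos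
  -- the kernel function after change of variables
  set H : ℝ → (Fin m → ℝ) → ℝ≥0∞ :=
    fun x t => (‖Q 1 t‖₊ : ℝ≥0∞) * ∏ j, (‖g j (x * t j)‖₊ : ℝ≥0∞) with hHdef
  have hQ1meas : Measurable fun t : Fin m → ℝ => Q 1 t :=
    hQmeas.comp (measurable_const.prodMk measurable_id)
  have hHmeas : Measurable (uncurry H) := by
    apply Measurable.mul
    · exact ((hQmeas.comp (measurable_const.prodMk measurable_snd)).nnnorm).coe_nnreal_ennreal
    · refine Finset.measurable_prod _ fun j _ => ?_
      exact (((hg j).comp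
        (measurable_fst.mul ((measurable_pi_apply j).comp measurable_snd))).nnnorm).coe_nnreal_ennreal
  -- Part 1: pointwise domination after substitution
  have claim1 : ∀ᵐ x ∂muHalf,
      ((‖∫ xs, Q x xs * ∏ j, g j (xs j) ∂(piHalf m)‖₊ : ℝ≥0∞)) ^ q
        ≤ (∫⁻ t, H x t ∂(piHalf m)) ^ q := by
    refine hxpos.mono fun x hx => ?_
    refine ENNReal.rpow_le_rpow ?_ hq0.le
    set g₀ : (Fin m → ℝ) → ℝ≥0∞ :=
      fun xs => (‖Q x xs‖₊ : ℝ≥0∞) * ∏ j, (‖g j (xs j)‖₊ : ℝ≥0∞) with hg₀def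
    have hg₀meas : Measurable g₀ := by
      apply Measurable.mul
      · exact ((hQmeas.comp (measurable_const.prodMk measurable_id)).nnnorm).coe_nnreal_ennreal
      · refine Finset.measurable_prod _ fun j _ => ?_
        exact (((hg j).comp (measurable_pi_apply j)).nnnorm).coe_nnreal_ennreal
    have step0 : ((‖∫ xs, Q x xs * ∏ j, g j (xs j) ∂(piHalf m)‖₊ : ℝ≥0∞))
        ≤ ∫⁻ xs, g₀ xs ∂(piHalf m) := by
      refine le_trans (enorm_integral_le_lintegral_enorm _) (le_of_eq ?_)
      refine lintegral_congr fun xs => ?_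
      rw [hg₀def]
      push_cast [nnnorm_mul, nnnorm_prod]
      simp only [enorm_eq_nnnorm, nnnorm_mul, nnnorm_prod]; push_cast; rfl
    refine le_trans step0 (le_of_eq ?_)
    -- change of variables
    have hsub := lintegral_piHalf_comp_mul m hx hg₀meas
    have hcancel1 : (ENNReal.ofReal x) ^ m * (ENNReal.ofReal x⁻¹) ^ m = 1 := by
      rw [← mul_pow, ← ENNReal.ofReal_mul hx.le, mul_inv_cancel₀ hx.ne',
        ENNReal.ofReal_one, one_pow]
    have e0 : ∫⁻ xs, g₀ xs ∂(piHalf m)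
        = (ENNReal.ofReal x) ^ m * ∫⁻ t, g₀ (fun j => x * t j) ∂(piHalf m) := by
      rw [hsub, ← mul_assoc, hcancel1, one_mul]
    rw [e0]
    have e1 : ∫⁻ t, g₀ (fun j => x * t j) ∂(piHalf m)
        = ENNReal.ofReal (x ^ (-(m:ℝ))) * ∫⁻ t, H x t ∂(piHalf m) := by
      rw [← lintegral_const_mul _ hHmeas.of_uncurry_left]
      refine lintegral_congr_ae (htpos.mono fun t ht => ?_)
      have hQx : Q x (fun j => x * t j) = x ^ (-(m:ℝ)) * Q 1 t := by
        have := hhom x hx 1 one_pos t ht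
        rwa [mul_one] at this
      rw [hg₀def, hHdef]
      simp only
      rw [hQx, nnnorm_mul]
      push_cast
      rw [← enorm_eq_nnnorm, Real.enorm_eq_ofReal_abs (x ^ (-(m:ℝ))),
        abs_of_pos (Real.rpow_pos_of_pos hx _)]
      ring
    rw [e1, ← mul_assoc]
    have hcancel2 : (ENNReal.ofReal x) ^ m * ENNReal.ofReal (x ^ (-(m:ℝ))) = 1 := by
      rw [Real.rpow_neg hx.le, Real.rpow_natCast,
        ENNReal.ofReal_inv_of_pos (pow_pos hx m), ENNReal.ofReal_pow hx.le]
      exact ENNReal.mul_inv_cancel (pow_ne_zero m (ENNReal.ofReal_pos.2 hx).ne')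
        (pow_ne_top ENNReal.ofReal_ne_top)
    rw [hcancel2, one_mul]
  -- Part 3: per-t estimate
  set Nj : Fin m → ℝ≥0∞ := fun j => eLpNorm (g j) (ENNReal.ofReal (p j)) muHalf with hNjdef
  have hAj : ∀ j, ∫⁻ y, (‖g j y‖₊ : ℝ≥0∞) ^ (p j) ∂muHalf = (Nj j) ^ (p j) := by
    intro j
    rw [hNjdef]
    simp only
    rw [eLpNorm_eq_lintegral_rpow_enorm_toReal (ENNReal.ofReal_pos.2 (hppos j)).ne'
      ENNReal.ofReal_ne_top, ENNReal.toReal_ofReal (hppos j).le,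
      ← ENNReal.rpow_mul, one_div_mul_cancel (hppos j).ne', ENNReal.rpow_one]
    simp only [enorm_eq_nnnorm]
  have claim3 : ∀ᵐ t ∂(piHalf m),
      (∫⁻ x, H x t ^ q ∂muHalf) ^ (1 / q)
        ≤ ENNReal.ofReal (|Q 1 t| * ∏ j, (t j) ^ (-(1 / p j))) * ∏ j, Nj j := by
    refine htpos.mono fun t ht => ?_
    have hHq : ∀ x, H x t ^ q
        = (‖Q 1 t‖₊ : ℝ≥0∞) ^ q
          * ∏ j, ((‖g j (x * t j)‖₊ : ℝ≥0∞) ^ (p j)) ^ (q / p j) := by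
      intro x
      rw [hHdef]
      simp only
      rw [ENNReal.mul_rpow_of_nonneg _ _ hq0.le, ← ENNReal.prod_rpow_of_nonneg hq0.le]
      congr 1
      refine Finset.prod_congr rfl fun j _ => ?_
      rw [← ENNReal.rpow_mul]
      congr 1
      rw [mul_div_assoc'] 
      exact (mul_div_cancel_left₀ q (hppos j).ne').symm
    have hmeasj : ∀ j, Measurable fun x : ℝ => ((‖g j (x * t j)‖₊ : ℝ≥0∞)) ^ (p j) :=
      fun j => (((hg j).comp (measurable_id.mul_const (t j))).nnnorm).coe_nnreal_ennreal.pow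
        measurable_const
    have hsum' : ∑ j, q / p j = 1 := by
      have : ∀ j : Fin m, q / p j = q * (1 / p j) := fun j => by ring
      rw [Finset.sum_congr rfl fun j _ => this j, ← Finset.mul_sum, hsum]
      field_simp
    have hscale : ∀ j, ∫⁻ x, ((‖g j (x * t j)‖₊ : ℝ≥0∞)) ^ (p j) ∂muHalf
        = ENNReal.ofReal (t j)⁻¹ * (Nj j) ^ (p j) := by
      intro j
      have hmeasy : Measurable fun y : ℝ => ((‖g j y‖₊ : ℝ≥0∞)) ^ (p j) :=
        (((hg j).nnnorm).coe_nnreal_ennreal).pow measurable_const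
      calc ∫⁻ x, ((‖g j (x * t j)‖₊ : ℝ≥0∞)) ^ (p j) ∂muHalf
          = ∫⁻ x, ((‖g j (t j * x)‖₊ : ℝ≥0∞)) ^ (p j) ∂muHalf := by
            refine lintegral_congr fun x => ?_
            rw [mul_comm]
        _ = ENNReal.ofReal (t j)⁻¹ * ∫⁻ y, ((‖g j y‖₊ : ℝ≥0∞)) ^ (p j) ∂muHalf :=
            lintegral_muHalf_comp_mul (ht j) hmeasy
        _ = ENNReal.ofReal (t j)⁻¹ * (Nj j) ^ (p j) := by rw [hAj j]
    have hstep : ∫⁻ x, H x t ^ q ∂muHalf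
        ≤ (‖Q 1 t‖₊ : ℝ≥0∞) ^ q
          * ∏ j, (ENNReal.ofReal (t j)⁻¹ * (Nj j) ^ (p j)) ^ (q / p j) := by
      simp_rw [hHq]
      rw [lintegral_const_mul _ (Finset.measurable_prod _ fun j _ =>
        (hmeasj j).pow measurable_const)]
      refine mul_le_mul_right ?_ _
      have hold := ENNReal.lintegral_prod_norm_pow_le (μ := muHalf) Finset.univ
        (f := fun j x => ((‖g j (x * t j)‖₊ : ℝ≥0∞)) ^ (p j))
        (fun j _ => (hmeasj j).aemeasurable) (p := fun j => q / p j) hsum'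
        (fun j _ => div_nonneg hq0.le (hppos j).le)
      refine le_trans hold (le_of_eq (Finset.prod_congr rfl fun j _ => ?_))
      rw [hscale j]
    have hfinal : ((‖Q 1 t‖₊ : ℝ≥0∞) ^ q
          * ∏ j, (ENNReal.ofReal (t j)⁻¹ * (Nj j) ^ (p j)) ^ (q / p j)) ^ (1 / q)
        = ENNReal.ofReal (|Q 1 t| * ∏ j, (t j) ^ (-(1 / p j))) * ∏ j, Nj j := by
      rw [ENNReal.mul_rpow_of_nonneg _ _ (by positivity), ← ENNReal.rpow_mul,
        mul_one_div_cancel hq0.ne', ENNReal.rpow_one,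
        ← ENNReal.prod_rpow_of_nonneg (by positivity)]
      have e3 : ∀ j : Fin m,
          ((ENNReal.ofReal (t j)⁻¹ * (Nj j) ^ (p j)) ^ (q / p j)) ^ (1 / q)
            = (ENNReal.ofReal (t j)) ^ (-(1 / p j)) * Nj j := by
        intro j
        rw [← ENNReal.rpow_mul]
        have : q / p j * (1 / q) = 1 / p j := by
          rw [div_mul_div_comm, mul_one, mul_comm (p j) q, ← div_div, div_self hq0.ne']
        rw [this, ENNReal.mul_rpow_of_nonneg _ _ (one_div_nonneg.2 (hppos j).le),
          ← ENNReal.rpow_mul,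
          mul_one_div_cancel (hppos j).ne', ENNReal.rpow_one,
          ENNReal.ofReal_inv_of_pos (ht j), ENNReal.inv_rpow, ← ENNReal.rpow_neg]
      rw [Finset.prod_congr rfl fun j _ => e3 j, Finset.prod_mul_distrib,
        ENNReal.ofReal_mul (abs_nonneg _), ← Real.enorm_eq_ofReal_abs,
        ENNReal.ofReal_prod_of_nonneg (fun j _ => Real.rpow_nonneg (ht j).le _)]
      rw [Finset.prod_congr rfl fun j _ => (ENNReal.ofReal_rpow_of_pos (ht j) : _)]
      simp only [enorm_eq_nnnorm]
      ring
    calc (∫⁻ x, H x t ^ q ∂muHalf) ^ (1 / q)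
        ≤ ((‖Q 1 t‖₊ : ℝ≥0∞) ^ q
          * ∏ j, (ENNReal.ofReal (t j)⁻¹ * (Nj j) ^ (p j)) ^ (q / p j)) ^ (1 / q) :=
          ENNReal.rpow_le_rpow hstep (by positivity)
      _ = ENNReal.ofReal (|Q 1 t| * ∏ j, (t j) ^ (-(1 / p j))) * ∏ j, Nj j := hfinal
  -- assembling
  have hθmeas : Measurable fun t : Fin m → ℝ =>
      ENNReal.ofReal (|Q 1 t| * ∏ j, (t j) ^ (-(1 / p j))) := by
    refine Measurable.ennreal_ofReal (Measurable.mul ?_ ?_)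
    · exact hQ1meas.abs
    · exact Finset.measurable_prod _ fun j _ => (measurable_pi_apply j).pow measurable_const
  calc eLpNorm (fun x => ∫ xs, Q x xs * ∏ j, g j (xs j) ∂(piHalf m)) (ENNReal.ofReal q) muHalf
      = (∫⁻ x, ((‖∫ xs, Q x xs * ∏ j, g j (xs j) ∂(piHalf m)‖₊ : ℝ≥0∞)) ^ q ∂muHalf)
          ^ (1 / q) := by
        rw [eLpNorm_eq_lintegral_rpow_enorm_toReal (ENNReal.ofReal_pos.2 hq0).ne'
          ENNReal.ofReal_ne_top, ENNReal.toReal_ofReal hq0.le]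
        simp only [enorm_eq_nnnorm]
    _ ≤ (∫⁻ x, (∫⁻ t, H x t ∂(piHalf m)) ^ q ∂muHalf) ^ (1 / q) :=
        ENNReal.rpow_le_rpow (lintegral_mono_ae claim1) (by positivity)
    _ ≤ ∫⁻ t, (∫⁻ x, H x t ^ q ∂muHalf) ^ (1 / q) ∂(piHalf m) :=
        minkowski_lintegral muHalf (piHalf m) hHmeas hq
    _ ≤ ∫⁻ t, ENNReal.ofReal (|Q 1 t| * ∏ j, (t j) ^ (-(1 / p j))) * ∏ j, Nj j ∂(piHalf m) :=
        lintegral_mono_ae claim3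
    _ = Theta m Q p * ∏ j, Nj j := by
        rw [lintegral_mul_const _ hθmeas, Theta]


/-- For every `p ≥ 1` with `β_m(p) < ∞`, `‖M(f⃗)‖_{L^p(ℝ₊)} ≤ β_m(p)`; equivalently the
Grand Lebesgue norm of `M(f⃗)` generated by `β_m` is at most `1`. -/
theorem stmt11 (m : ℕ) (Q : ℝ → (Fin m → ℝ) → ℝ)
    (hQmeas : Measurable (fun z : ℝ × (Fin m → ℝ) => Q z.1 z.2))
    (hhom : ∀ δ > (0:ℝ), ∀ x > (0:ℝ), ∀ xs : Fin m → ℝ, (∀ j, 0 < xs j) →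
      Q (δ * x) (fun j => δ * xs j) = δ ^ (-(m:ℝ)) * Q x xs)
    (a : Fin m → ℝ) (b : Fin m → ℝ≥0∞) (ha : ∀ j, 1 ≤ a j)
    (ψ : Fin m → ℝ → ℝ)
    (hψpos : ∀ j, ∃ c > (0:ℝ), ∀ p, a j < p → (ENNReal.ofReal p) < b j → c ≤ ψ j p)
    (f : Fin m → ℝ → ℝ) (hfm : ∀ j, AEStronglyMeasurable (f j) muHalf)
    (hf : ∀ j, grandNorm muHalf (a j) (b j) (ψ j) (f j) < ∞) :
    (∀ q : ℝ, 1 ≤ q → betaFun m Q a b ψ f q < ∞ →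
      eLpNorm (fun x => ∫ xs, Q x xs * ∏ j, f j (xs j) ∂(piHalf m))
          (ENNReal.ofReal q) muHalf
        ≤ betaFun m Q a b ψ f q) ∧
    (⨆ q : {q : ℝ // 1 ≤ q ∧ betaFun m Q a b ψ f q < ∞},
        eLpNorm (fun x => ∫ xs, Q x xs * ∏ j, f j (xs j) ∂(piHalf m))
            (ENNReal.ofReal q.1) muHalf / betaFun m Q a b ψ f q.1) ≤ 1 := by
  -- replace `f` by a measurable representative `g`
  set g : Fin m → ℝ → ℝ := fun j => (hfm j).mk (f j) with hgdef
  have hgmeas : ∀ j, Measurable (g j) := fun j => (hfm j).stronglyMeasurable_mk.measurable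
  have heq : ∀ j, f j =ᵐ[muHalf] g j := fun j => (hfm j).ae_eq_mk
  have hMeq : (fun x => ∫ xs, Q x xs * ∏ j, f j (xs j) ∂(piHalf m))
      = (fun x => ∫ xs, Q x xs * ∏ j, g j (xs j) ∂(piHalf m)) := by
    funext x
    refine integral_congr_ae ?_
    have hj : ∀ j, ∀ᵐ xs ∂(piHalf m), f j (xs j) = g j (xs j) := by
      intro j
      rw [piHalf]
      exact (Measure.tendsto_eval_ae_ae (μ := fun _ : Fin m => muHalf) (i := j)).eventually
        (heq j)
    refine (Filter.eventually_all.2 hj).mono fun xs hxs => ?_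
    show Q x xs * ∏ j, f j (xs j) = Q x xs * ∏ j, g j (xs j)
    rw [Finset.prod_congr rfl fun j _ => hxs j]
  have main : ∀ q : ℝ, 1 ≤ q →
      eLpNorm (fun x => ∫ xs, Q x xs * ∏ j, f j (xs j) ∂(piHalf m))
          (ENNReal.ofReal q) muHalf
        ≤ betaFun m Q a b ψ f q := by
    intro q hq
    rw [betaFun]
    refine le_iInf fun pp => ?_
    obtain ⟨p, hpab, hsum⟩ := pp
    have hp1 : ∀ j, 1 < p j := fun j => lt_of_le_of_lt (ha j) (hpab j).1
    have core := core_bound m Q hQmeas hhom g hgmeas hq hp1 hsum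
    rw [hMeq]
    refine le_trans core (mul_le_mul_right (Finset.prod_le_prod' fun j _ => ?_) _)
    obtain ⟨c, hc, hcle⟩ := hψpos j
    have hψj : 0 < ψ j (p j) := lt_of_lt_of_le hc (hcle _ (hpab j).1 (hpab j).2)
    have hle : eLpNorm (f j) (ENNReal.ofReal (p j)) muHalf / ENNReal.ofReal (ψ j (p j))
        ≤ grandNorm muHalf (a j) (b j) (ψ j) (f j) := by
      rw [grandNorm]
      exact le_iSup (fun pp : {r : ℝ // a j < r ∧ (ENNReal.ofReal r) < b j} =>
        eLpNorm (f j) (ENNReal.ofReal pp.1) muHalf / ENNReal.ofReal (ψ j pp.1))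
        ⟨p j, hpab j⟩
    calc eLpNorm (g j) (ENNReal.ofReal (p j)) muHalf
        = eLpNorm (f j) (ENNReal.ofReal (p j)) muHalf := eLpNorm_congr_ae (heq j).symm
      _ = ENNReal.ofReal (ψ j (p j))
          * (eLpNorm (f j) (ENNReal.ofReal (p j)) muHalf / ENNReal.ofReal (ψ j (p j))) :=
          (ENNReal.mul_div_cancel (ENNReal.ofReal_pos.2 hψj).ne' ENNReal.ofReal_ne_top).symm
      _ ≤ ENNReal.ofReal (ψ j (p j)) * grandNorm muHalf (a j) (b j) (ψ j) (f j) :=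
          mul_le_mul_right hle _
  refine ⟨fun q hq _ => main q hq, ?_⟩
  refine iSup_le fun qq => ?_
  refine ENNReal.div_le_of_le_mul ?_
  rw [one_mul]
  exact main qq.1 qq.2.1
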